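/- In a graph G of arboricity at most a, the number of triangles (cycles of length 3) is at most a·m, where m is the number of edges of G. -/

import Mathlib

/-- `ArboricityLE G a` : the edges of `G` can be partitioned into `a` forests. -/
def ArboricityLE {V : Type} (G : SimpleGraph V) (a : ℕ) : Prop :=
  ∃ F : Fin a → SimpleGraph V,
    (∀ i, (F i).IsAcyclic) ∧ (∀ i, F i ≤ G) ∧
    (∀ u v : V, G.Adj u v → ∃! i, (F i).Adj u v)

open SimpleGraph Finset

/-- In an acyclic graph, a vertex has at most one neighbor strictly closer to a
reachable target. -/
lemma unique_down {V : Type} [DecidableEq V] {F : SimpleGraph V} (hF : F.IsAcyclic)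
    {u w1 w2 ρ : V} (h1 : F.Adj u w1) (h2 : F.Adj u w2)
    (hr1 : F.Reachable w1 ρ) (hr2 : F.Reachable w2 ρ)
    (hd1 : F.dist w1 ρ < F.dist u ρ) (hd2 : F.dist w2 ρ < F.dist u ρ) :
    w1 = w2 := by
  obtain ⟨P1, hP1, hl1⟩ := hr1.exists_path_of_dist
  obtain ⟨P2, hP2, hl2⟩ := hr2.exists_path_of_dist
  have hu1 : u ∉ P1.support := by
    intro hu
    have := F.dist_le (P1.dropUntil u hu)
    have := P1.length_dropUntil_le hu
    omega
  have hu2 : u ∉ P2.support := by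
    intro hu
    have := F.dist_le (P2.dropUntil u hu)
    have := P2.length_dropUntil_le hu
    omega
  have hQ1 : (SimpleGraph.Walk.cons h1 P1).IsPath := hP1.cons hu1
  have hQ2 : (SimpleGraph.Walk.cons h2 P2).IsPath := hP2.cons hu2
  have := SimpleGraph.isAcyclic_iff_path_unique.mp hF ⟨_, hQ1⟩ ⟨_, hQ2⟩
  have hsupp := congrArg (fun q : F.Path u ρ => q.1.support) this
  simp only [SimpleGraph.Walk.support_cons] at hsupp
  rw [P1.support_eq_cons, P2.support_eq_cons] at hsupp
  exact (List.cons.injEq _ _ _ _).mp ((List.cons.injEq _ _ _ _).mp hsupp).2 |>.1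

/-- Every forest admits a "parent" map orienting each edge in exactly one
direction. -/
lemma exists_parent {V : Type} [DecidableEq V] {F : SimpleGraph V} (hF : F.IsAcyclic) :
    ∃ p : V → V, ∀ u v : V, F.Adj u v → (p u = v ↔ ¬ p v = u) := by
  classical
  set r : V → V := fun v => (F.connectedComponentMk v).out with hr_def
  have hr : ∀ v, F.Reachable v (r v) := by
    intro v
    have h1 : F.connectedComponentMk (r v) = F.connectedComponentMk v :=
      Quot.out_eq _
    exact (SimpleGraph.ConnectedComponent.eq.mp h1).symm
  have hradj : ∀ u v, F.Adj u v → r u = r v := by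
    intro u v huv
    simp only [hr_def]
    rw [SimpleGraph.ConnectedComponent.sound huv.reachable]
  set p : V → V := fun u =>
    if h : ∃ w, F.Adj u w ∧ F.dist w (r u) < F.dist u (r u) then h.choose else u
    with hp_def
  have hpd : ∀ u v, F.Adj u v → p u = v → F.dist v (r u) < F.dist u (r u) := by
    intro u v huv hpu
    by_cases h : ∃ w, F.Adj u w ∧ F.dist w (r u) < F.dist u (r u)
    · have hspec := h.choose_spec
      have : p u = h.choose := by simp [hp_def, h]
      rw [this] at hpu
      rw [← hpu]
      exact hspec.2
    · have : p u = u := by simp [hp_def, h]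
      rw [this] at hpu
      exact absurd (hpu ▸ huv) (F.loopless.irrefl _)
  have hdown : ∀ u v, F.Adj u v → F.dist v (r u) < F.dist u (r u) → p u = v := by
    intro u v huv hlt
    have h : ∃ w, F.Adj u w ∧ F.dist w (r u) < F.dist u (r u) := ⟨v, huv, hlt⟩
    have hspec := h.choose_spec
    have heq : p u = h.choose := by simp [hp_def, h]
    rw [heq]
    exact unique_down hF hspec.1 huv
      (hspec.1.symm.reachable.trans (hr u)) (huv.symm.reachable.trans (hr u))
      hspec.2 hlt
  have htri : ∀ u v, F.Adj u v → F.dist u (r u) ≠ F.dist v (r u) := by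
    intro u v huv heq
    have hru : F.Reachable u (r u) := hr u
    have hrv : F.Reachable v (r u) := huv.symm.reachable.trans hru
    set ρ := r u
    set d := F.dist u ρ with hd
    by_cases hd0 : d = 0
    · have h1 : u = ρ := hru.dist_eq_zero_iff.mp hd0
      have h2 : v = ρ := hrv.dist_eq_zero_iff.mp (by omega)
      exact F.loopless.irrefl _ (h1 ▸ h2 ▸ huv)
    · obtain ⟨P, hP, hl⟩ := hru.exists_path_of_dist
      by_cases hv : v ∈ P.support
      · have h1 := F.dist_le (P.dropUntil v hv)
        have h2 := congrArg SimpleGraph.Walk.length (P.take_spec hv)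
        rw [SimpleGraph.Walk.length_append] at h2
        have h3 : (P.takeUntil v hv).length ≠ 0 := by
          intro h0
          have := (SimpleGraph.Walk.eq_of_length_eq_zero h0)
          exact F.loopless.irrefl _ (this ▸ huv)
        omega
      · have hQ : (SimpleGraph.Walk.cons huv.symm P).IsPath := hP.cons hv
        obtain ⟨Q2, hQ2, hl2⟩ := hrv.exists_path_of_dist
        have := SimpleGraph.isAcyclic_iff_path_unique.mp hF ⟨_, hQ⟩ ⟨Q2, hQ2⟩
        have hlen := congrArg (fun q : F.Path v ρ => q.1.length) this
        simp only [SimpleGraph.Walk.length_cons] at hlen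
        omega
  refine ⟨p, fun u v huv => ?_⟩
  constructor
  · intro hpu hpv
    have h1 := hpd u v huv hpu
    have h2 := hpd v u huv.symm hpv
    rw [← hradj u v huv] at h2
    omega
  · intro hn
    rcases lt_trichotomy (F.dist v (r u)) (F.dist u (r u)) with h | h | h
    · exact hdown u v huv h
    · exact absurd h.symm (htri u v huv)
    · exact absurd (hdown v u huv.symm (by rwa [← hradj u v huv])) hn

/-- In a graph of arboricity at most `a`, the number of triangles is at most
`a * m`, where `m` is the number of edges. -/
theorem arboricity_triangle_bound {V : Type} [Fintype V] [DecidableEq V]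
    (G : SimpleGraph V) [DecidableRel G.Adj] (a : ℕ) (h : ArboricityLE G a) :
    (G.cliqueFinset 3).card ≤ a * G.edgeFinset.card := by
  classical
  obtain ⟨F, hac, hle, hu⟩ := h
  choose p hp using fun i => exists_parent (hac i)
  set D : V → V → Prop := fun x y => ∃ i, (F i).Adj x y ∧ p i x = y with hD_def
  have hD3 : ∀ x y, D x y → G.Adj x y := fun x y ⟨i, hi, _⟩ => hle i hi
  have hD1 : ∀ x y, G.Adj x y → D x y ∨ D y x := by
    intro x y hxy
    obtain ⟨i, hi, -⟩ := hu x y hxy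
    by_cases hpi : p i x = y
    · exact Or.inl ⟨i, hi, hpi⟩
    · exact Or.inr ⟨i, hi.symm, by
        by_contra hc
        exact hpi ((hp i x y hi).mpr hc)⟩
  have hD2 : ∀ x y, D x y → ¬D y x := by
    rintro x y ⟨i, hi, hpi⟩ ⟨j, hj, hpj⟩
    obtain ⟨k, -, hk⟩ := hu x y (hle i hi)
    have hij : i = j := (hk i hi).trans (hk j hj.symm).symm
    subst hij
    exact ((hp i x y hi).mp hpi) hpj
  set S : Finset (V × V × V) :=
    Finset.univ.filter (fun t => D t.1 t.2.1 ∧ D t.2.1 t.2.2) with hS_def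
  -- every triangle yields a directed 2-path on its vertices
  have hch : ∀ t ∈ G.cliqueFinset 3, ∃ x : V × V × V,
      ({x.1, x.2.1, x.2.2} : Finset V) = t ∧ D x.1 x.2.1 ∧ D x.2.1 x.2.2 := by
    intro t ht
    rw [SimpleGraph.mem_cliqueFinset_iff, SimpleGraph.isNClique_iff] at ht
    obtain ⟨hcl, hcard⟩ := ht
    obtain ⟨x, y, z, hxy, hxz, hyz, rfl⟩ := Finset.card_eq_three.mp hcard
    have mx : x ∈ ({x, y, z} : Finset V) := by simp
    have my : y ∈ ({x, y, z} : Finset V) := by simp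
    have mz : z ∈ ({x, y, z} : Finset V) := by simp
    have hab : G.Adj x y := hcl mx my hxy
    have hac' : G.Adj x z := hcl mx mz hxz
    have hbc : G.Adj y z := hcl my mz hyz
    have perm1 : ({x, z, y} : Finset V) = {x, y, z} := by
      ext; simp; tauto
    have perm2 : ({z, x, y} : Finset V) = {x, y, z} := by
      ext; simp; tauto
    have perm3 : ({y, x, z} : Finset V) = {x, y, z} := by
      ext; simp; tauto
    have perm4 : ({y, z, x} : Finset V) = {x, y, z} := by
      ext; simp; tauto
    have perm5 : ({z, y, x} : Finset V) = {x, y, z} := by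
      ext; simp; tauto
    rcases hD1 x y hab with h1 | h1
    · rcases hD1 y z hbc with h2 | h2
      · exact ⟨(x, y, z), rfl, h1, h2⟩
      · rcases hD1 x z hac' with h3 | h3
        · exact ⟨(x, z, y), perm1, h3, h2⟩
        · exact ⟨(z, x, y), perm2, h3, h1⟩
    · rcases hD1 x z hac' with h3 | h3
      · exact ⟨(y, x, z), perm3, h1, h3⟩
      · rcases hD1 y z hbc with h2 | h2
        · exact ⟨(y, z, x), perm4, h2, h3⟩
        · exact ⟨(z, y, x), perm5, h2, h1⟩
  -- injection from triangles into S
  have step1 : (G.cliqueFinset 3).card ≤ S.card := by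
    rcases (G.cliqueFinset 3).eq_empty_or_nonempty with he | ⟨t0, ht0⟩
    · simp [he]
    · have : Nonempty V := by
        obtain ⟨x, -, -⟩ := hch t0 ht0
        exact ⟨x.1⟩
      set f : Finset V → V × V × V := fun t =>
        if h : ∃ x : V × V × V,
            ({x.1, x.2.1, x.2.2} : Finset V) = t ∧ D x.1 x.2.1 ∧ D x.2.1 x.2.2
        then h.choose else (Classical.arbitrary V, Classical.arbitrary V,
          Classical.arbitrary V) with hf_def
      have hfspec : ∀ t ∈ G.cliqueFinset 3,
          ({(f t).1, (f t).2.1, (f t).2.2} : Finset V) = t ∧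
            D (f t).1 (f t).2.1 ∧ D (f t).2.1 (f t).2.2 := by
        intro t ht
        have h := hch t ht
        have : f t = h.choose := dif_pos h
        rw [this]
        exact h.choose_spec
      apply Finset.card_le_card_of_injOn f
      · intro t ht
        obtain ⟨-, h1, h2⟩ := hfspec t ht
        simp only [Finset.mem_coe, hS_def, Finset.mem_filter, Finset.mem_univ, true_and]
        exact ⟨h1, h2⟩
      · intro t1 h1 t2 h2 hf
        have e1 := (hfspec t1 h1).1
        have e2 := (hfspec t2 h2).1
        rw [← e1, ← e2, hf]
  -- bound on S
  set g : V × V × V → V × V := fun t => (t.1, t.2.1) with hg_def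
  have step2 : S.card ≤ a * (S.image g).card := by
    apply Finset.card_le_mul_card_image
    intro b hb
    calc (S.filter fun x => g x = b).card
        ≤ ((Finset.univ : Finset (Fin a)).image
            (fun i => (b.1, b.2, p i b.2))).card := by
          apply Finset.card_le_card
          intro x hx
          simp only [Finset.mem_filter, hS_def, Finset.mem_univ, true_and] at hx
          obtain ⟨⟨-, i, -, hpi⟩, hgx⟩ := hx
          simp only [Finset.mem_image, Finset.mem_univ, true_and]
          refine ⟨i, ?_⟩
          have hb1 : x.1 = b.1 := congrArg Prod.fst hgx
          have hb2 : x.2.1 = b.2 := congrArg Prod.snd hgx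
          rw [← hb1, ← hb2, hpi]
      _ ≤ (Finset.univ : Finset (Fin a)).card := Finset.card_image_le
      _ = a := by simp
  set A : Finset (V × V) := Finset.univ.filter (fun q => D q.1 q.2) with hA_def
  have step3 : (S.image g).card ≤ A.card := by
    apply Finset.card_le_card
    intro q hq
    simp only [Finset.mem_image, hS_def, Finset.mem_filter, Finset.mem_univ,
      true_and] at hq
    obtain ⟨x, ⟨h1, -⟩, rfl⟩ := hq
    simp only [hA_def, Finset.mem_filter, Finset.mem_univ, true_and, hg_def]
    exact h1
  have step4 : A.card = G.edgeFinset.card := by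
    apply Finset.card_bij (s := A) (t := G.edgeFinset) (fun (q : V × V) _ => Sym2.mk q.1 q.2)
    · intro q hq
      simp only [hA_def, Finset.mem_filter, Finset.mem_univ, true_and] at hq
      rw [SimpleGraph.mem_edgeFinset]
      exact hD3 _ _ hq
    · intro q1 h1 q2 h2 heq
      simp only [hA_def, Finset.mem_filter, Finset.mem_univ, true_and] at h1 h2
      rw [Sym2.mk_eq_mk_iff] at heq
      rcases heq with heq | heq
      · exact Prod.ext (congrArg Prod.fst heq) (congrArg Prod.snd heq)
      · have ha : q1.1 = q2.2 := congrArg Prod.fst heq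
        have hb : q1.2 = q2.1 := congrArg Prod.snd heq
        rw [ha, hb] at h1
        exact absurd h1 (hD2 _ _ h2)
    · intro e he
      rw [SimpleGraph.mem_edgeFinset] at he
      induction e with
      | _ x y =>
        rcases hD1 x y he with hd | hd
        · exact ⟨(x, y), by simp [hA_def, hd], rfl⟩
        · exact ⟨(y, x), by simp [hA_def, hd], Sym2.eq_swap⟩
  calc (G.cliqueFinset 3).card ≤ S.card := step1
    _ ≤ a * (S.image g).card := step2
    _ ≤ a * A.card := Nat.mul_le_mul_left a step3
    _ = a * G.edgeFinset.card := by rw [step4]
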